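/- Let E be a Banach space whose dual X = E* is norm-separable, and let T : X → X be a bounded linear operator which is weak*-weak*-continuous. Then the following assertions are equivalent: (i) T is AP_b-hypercyclic; (ii) T is hypercyclic and has dense small periodic sets; (iii) T is chaotic. -/

import Mathlib

open NormedSpace

/-- A set `A ⊆ ℕ` belongs to the family `AP_b` if it contains arbitrarily long
arithmetic progressions with some fixed common difference `k ≥ 1`. -/
def APb (A : Set ℕ) : Prop :=
  ∃ k : ℕ, 1 ≤ k ∧ ∀ m : ℕ, ∃ a : ℕ, ∀ j : ℕ, j ≤ m → a + j * k ∈ A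

section Aux

variable {E : Type*} [NormedAddCommGroup E] [NormedSpace ℝ E]

/-- Weak*-continuity of the powers of a weak*-continuous operator. -/
lemma auxContPow (T : StrongDual ℝ E →L[ℝ] StrongDual ℝ E)
    (hTw : Continuous fun φ : WeakDual ℝ E =>
      StrongDual.toWeakDual (T (StrongDual.toWeakDual.symm φ))) (n : ℕ) :
    Continuous fun φ : WeakDual ℝ E =>
      StrongDual.toWeakDual ((T ^ n) (StrongDual.toWeakDual.symm φ)) := by
  induction n with
  | zero =>
      exact continuous_id
  | succ n ih =>
      have h : (fun φ : WeakDual ℝ E =>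
          StrongDual.toWeakDual ((T ^ (n + 1)) (StrongDual.toWeakDual.symm φ))) =
          (fun φ : WeakDual ℝ E => StrongDual.toWeakDual ((T ^ n) (StrongDual.toWeakDual.symm φ))) ∘
            fun φ : WeakDual ℝ E => StrongDual.toWeakDual (T (StrongDual.toWeakDual.symm φ)) := by
        funext φ
        rfl
      rw [h]
      exact ih.comp hTw

set_option maxHeartbeats 1000000 in
/-- Cesàro-mean / Banach–Alaoglu argument: if a bounded set `Y ⊆ ball z r`
satisfies `T^k (Y) ⊆ Y` and is nonempty, then `T^k` has a fixed point in
`closedBall z r`. -/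
lemma auxFixedPoint (T : StrongDual ℝ E →L[ℝ] StrongDual ℝ E)
    (hTw : Continuous fun φ : WeakDual ℝ E =>
      StrongDual.toWeakDual (T (StrongDual.toWeakDual.symm φ)))
    (k : ℕ) (z : StrongDual ℝ E) (r : ℝ) (Y : Set (StrongDual ℝ E))
    (hYb : Y ⊆ Metric.ball z r)
    (hYinv : (fun y => (T ^ k) y) '' Y ⊆ Y)
    (y : StrongDual ℝ E) (hy : y ∈ Y) :
    ∃ p ∈ Metric.closedBall z r, (T ^ k) p = p := by
  -- the `T^k`-orbit of `y` stays in `Y`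
  have horb : ∀ j : ℕ, ((T ^ k) ^ j) y ∈ Y := by
    intro j
    induction j with
    | zero => simpa using hy
    | succ j ih =>
        have : ((T ^ k) ^ (j + 1)) y = (T ^ k) (((T ^ k) ^ j) y) := by
          rw [pow_succ'] ; rfl
        rw [this]
        exact hYinv ⟨_, ih, rfl⟩
  -- Cesàro means
  set u : ℕ → StrongDual ℝ E := fun n =>
    ((n : ℝ) + 1)⁻¹ • ∑ j ∈ Finset.range (n + 1), ((T ^ k) ^ j) y with hu
  have hpos : ∀ n : ℕ, (0 : ℝ) < (n : ℝ) + 1 := fun n => by positivity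
  have hu_mem : ∀ n, u n ∈ Metric.closedBall z r := by
    intro n
    have : u n = ∑ j ∈ Finset.range (n + 1),
        ((n : ℝ) + 1)⁻¹ • (((T ^ k) ^ j) y) := by
      simp only [hu, Finset.smul_sum]
    rw [this]
    refine (convex_closedBall z r).sum_mem (fun i _ => by positivity) ?_
      (fun i _ => Metric.ball_subset_closedBall (hYb (horb i)))
    rw [Finset.sum_const, Finset.card_range, nsmul_eq_mul]
    push_cast
    field_simp
  -- the defect of the means
  have hdiff : ∀ n, (T ^ k) (u n) - u n
      = ((n : ℝ) + 1)⁻¹ • (((T ^ k) ^ (n + 1)) y - y) := by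
    intro n
    have h1 : (T ^ k) (u n) = ((n : ℝ) + 1)⁻¹ •
        ∑ j ∈ Finset.range (n + 1), ((T ^ k) ^ (j + 1)) y := by
      rw [hu, map_smul, map_sum]
      congr 1
      refine Finset.sum_congr rfl fun j _ => ?_
      rw [pow_succ'] ; rfl
    rw [h1, hu]
    beta_reduce
    refine (smul_sub _ _ _).symm.trans ?_
    congr 1
    rw [← Finset.sum_sub_distrib,
      Finset.sum_range_sub (fun j => ((T ^ k) ^ j) y)]
    simp
  -- the defect tends to zero in norm
  have hrle : ∀ n, ‖((T ^ k) ^ (n + 1)) y - y‖ ≤ 2 * r := by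
    intro n
    have h1 : dist (((T ^ k) ^ (n + 1)) y) z < r := hYb (horb (n + 1))
    have h2 : dist y z < r := hYb hy
    calc ‖((T ^ k) ^ (n + 1)) y - y‖ = dist (((T ^ k) ^ (n + 1)) y) y := by
          rw [dist_eq_norm]
      _ ≤ dist (((T ^ k) ^ (n + 1)) y) z + dist z y := dist_triangle _ _ _
      _ ≤ r + r := by
          rw [dist_comm z y]
          exact add_le_add h1.le h2.le
      _ = 2 * r := by ring
  have hε : Filter.Tendsto (fun n => (T ^ k) (u n) - u n) Filter.atTop (nhds 0) := by
    have hbound : ∀ n : ℕ, ‖(T ^ k) (u n) - u n‖ ≤ 1 / ((n : ℝ) + 1) * (2 * r) := by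
      intro n
      rw [hdiff n, norm_smul, Real.norm_eq_abs,
        abs_of_pos (by positivity : (0:ℝ) < ((n:ℝ)+1)⁻¹)]
      calc ((n : ℝ) + 1)⁻¹ * ‖((T ^ k) ^ (n + 1)) y - y‖
          ≤ ((n : ℝ) + 1)⁻¹ * (2 * r) := by
            exact mul_le_mul_of_nonneg_left (hrle n) (by positivity)
        _ = 1 / ((n : ℝ) + 1) * (2 * r) := by rw [one_div]
    have hlim : Filter.Tendsto (fun n : ℕ => 1 / ((n : ℝ) + 1) * (2 * r))
        Filter.atTop (nhds 0) := by
      simpa using tendsto_one_div_add_atTop_nhds_zero_nat.mul_const (2 * r)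
    exact squeeze_zero_norm hbound hlim
  -- pass to the weak* topology
  set v : ℕ → WeakDual ℝ E := fun n => StrongDual.toWeakDual (u n) with hv
  have hvmem : ∀ n, v n ∈ (WeakDual.toStrongDual ⁻¹' Metric.closedBall z r) := by
    intro n
    exact hu_mem n
  have hcomp : IsCompact (WeakDual.toStrongDual ⁻¹' Metric.closedBall z r) :=
    WeakDual.isCompact_closedBall z r
  have hle : Filter.map v Filter.atTop ≤
      Filter.principal (WeakDual.toStrongDual ⁻¹' Metric.closedBall z r) := by
    rw [Filter.le_principal_iff, Filter.mem_map]
    exact Filter.Eventually.of_forall hvmem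
  obtain ⟨φ, hφmem, hφcl⟩ := hcomp.exists_clusterPt hle
  -- the filter along which `v` converges to `φ`
  set F : Filter ℕ := Filter.atTop ⊓ Filter.comap v (nhds φ) with hF
  have hFne : F.NeBot := by
    apply Filter.NeBot.of_map (m := v)
    rw [hF, Filter.push_pull]
    have : (nhds φ ⊓ Filter.map v Filter.atTop).NeBot := hφcl
    rwa [inf_comm] at this
  have h1 : Filter.Tendsto v F (nhds φ) :=
    (Filter.tendsto_comap).mono_left inf_le_right
  -- weak* continuity of `T^k`
  have hSk := auxContPow T hTw k
  have h2 : Filter.Tendsto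
      (fun n => StrongDual.toWeakDual ((T ^ k) (StrongDual.toWeakDual.symm (v n)))) F
      (nhds (StrongDual.toWeakDual ((T ^ k) (StrongDual.toWeakDual.symm φ)))) :=
    (hSk.tendsto φ).comp h1
  have h3 : (fun n => StrongDual.toWeakDual ((T ^ k) (StrongDual.toWeakDual.symm (v n))))
      = fun n => v n + StrongDual.toWeakDual ((T ^ k) (u n) - u n) := by
    funext n
    rw [hv]
    simp only [LinearEquiv.symm_apply_apply]
    rw [← map_add]
    congr 1
    abel
  have h4 : Filter.Tendsto (fun n => StrongDual.toWeakDual ((T ^ k) (u n) - u n))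
      Filter.atTop (nhds 0) := by
    have := (Dual.toWeakDual_continuous.tendsto (0 : StrongDual ℝ E)).comp hε
    simpa [Function.comp_def] using this
  have h5 : Filter.Tendsto
      (fun n => v n + StrongDual.toWeakDual ((T ^ k) (u n) - u n)) F (nhds (φ + 0)) :=
    h1.add (h4.mono_left inf_le_left)
  rw [← h3] at h5
  have hfix : StrongDual.toWeakDual ((T ^ k) (StrongDual.toWeakDual.symm φ)) = φ := by
    have := tendsto_nhds_unique h2 h5
    rwa [add_zero] at this
  refine ⟨StrongDual.toWeakDual.symm φ, hφmem, ?_⟩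
  have h6 : StrongDual.toWeakDual ((T ^ k) (StrongDual.toWeakDual.symm φ))
      = StrongDual.toWeakDual (StrongDual.toWeakDual.symm φ) :=
    hfix.trans (LinearEquiv.apply_symm_apply _ _).symm
  exact (StrongDual.toWeakDual_inj _ _).1 h6

end Aux

/-- Let `E` be a Banach space whose dual `X = E*` is norm-separable and
let `T : X → X` be a bounded linear operator which is weak*-weak*-continuous. Then the
following are equivalent: (i) `T` is `AP_b`-hypercyclic; (ii) `T` is hypercyclic and has
dense small periodic sets; (iii) `T` is chaotic. -/
theorem APb_hypercyclic_iff_denseSmallPeriodicSets_iff_chaotic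
    {E : Type*} [NormedAddCommGroup E] [NormedSpace ℝ E] [CompleteSpace E]
    [TopologicalSpace.SeparableSpace (StrongDual ℝ E)]
    (T : StrongDual ℝ E →L[ℝ] StrongDual ℝ E)
    (hTw : Continuous fun φ : WeakDual ℝ E =>
      StrongDual.toWeakDual (T (StrongDual.toWeakDual.symm φ))) :
    List.TFAE [
      -- (i) T is AP_b-hypercyclic
      ∃ x : StrongDual ℝ E, ∀ U : Set (StrongDual ℝ E), IsOpen U → U.Nonempty →
        APb {n : ℕ | (T ^ n) x ∈ U},
      -- (ii) T is hypercyclic and has dense small periodic sets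
      (∃ x : StrongDual ℝ E, Dense (Set.range fun n : ℕ => (T ^ n) x)) ∧
        (∀ U : Set (StrongDual ℝ E), IsOpen U → U.Nonempty →
          ∃ Y : Set (StrongDual ℝ E), Y.Nonempty ∧ IsClosed Y ∧ Y ⊆ U ∧
            ∃ k : ℕ, 1 ≤ k ∧ (fun y => (T ^ k) y) '' Y ⊆ Y),
      -- (iii) T is chaotic
      (∃ x : StrongDual ℝ E, Dense (Set.range fun n : ℕ => (T ^ n) x)) ∧
        Dense {x : StrongDual ℝ E | ∃ n : ℕ, 1 ≤ n ∧ (T ^ n) x = x}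
    ] := by
  tfae_have 1 → 2 := by
    rintro ⟨x, hx⟩
    constructor
    · refine ⟨x, dense_iff_inter_open.2 fun U hU hUne => ?_⟩
      obtain ⟨k, _, hAP⟩ := hx U hU hUne
      obtain ⟨a, ha⟩ := hAP 0
      have := ha 0 le_rfl
      simp only [Set.mem_setOf_eq, zero_mul, add_zero] at this
      exact ⟨(T ^ a) x, this, ⟨a, rfl⟩⟩
    · intro U hU hUne
      obtain ⟨z, hz⟩ := hUne
      obtain ⟨r, hr0, hball⟩ :=
        (Metric.nhds_basis_closedBall.mem_iff).1 (hU.mem_nhds hz)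
      obtain ⟨k, hk1, hAP⟩ := hx (Metric.ball z r) Metric.isOpen_ball
        ⟨z, Metric.mem_ball_self hr0⟩
      -- work in the weak* topology
      set Cw : Set (WeakDual ℝ E) :=
        WeakDual.toStrongDual ⁻¹' Metric.closedBall z r with hCw
      have hCwc : IsCompact Cw := WeakDual.isCompact_closedBall z r
      have hCwcl : IsClosed Cw := hCwc.isClosed
      set S : ℕ → WeakDual ℝ E → WeakDual ℝ E := fun n φ =>
        StrongDual.toWeakDual ((T ^ n) (StrongDual.toWeakDual.symm φ)) with hS
      have hScont : ∀ n, Continuous (S n) := fun n => auxContPow T hTw n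
      set Fm : ℕ → Set (WeakDual ℝ E) := fun m =>
        Cw ∩ ⋂ j ∈ Finset.range (m + 1), (S (j * k)) ⁻¹' Cw with hFm
      have hFmcl : ∀ m, IsClosed (Fm m) := by
        intro m
        exact hCwcl.inter (isClosed_biInter fun j _ => hCwcl.preimage (hScont _))
      have hFmsub : ∀ m, Fm m ⊆ Cw := fun m => Set.inter_subset_left
      have hFmmono : ∀ m, Fm (m + 1) ⊆ Fm m := by
        intro m ψ hψ
        refine ⟨hψ.1, ?_⟩
        refine Set.mem_iInter₂.2 fun j hj => ?_
        have hj' : j ∈ Finset.range (m + 2) :=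
          Finset.mem_range.2 (Nat.lt_succ_of_lt (Finset.mem_range.1 hj))
        exact Set.mem_iInter₂.1 hψ.2 j hj'
      have hFmne : ∀ m, (Fm m).Nonempty := by
        intro m
        obtain ⟨a, ha⟩ := hAP m
        refine ⟨StrongDual.toWeakDual ((T ^ a) x), ?_, ?_⟩
        · show (T ^ a) x ∈ Metric.closedBall z r
          have := ha 0 (Nat.zero_le m)
          simp only [Set.mem_setOf_eq, zero_mul, add_zero] at this
          exact Metric.ball_subset_closedBall this
        · refine Set.mem_iInter₂.2 fun j hj => ?_
          show S (j * k) (StrongDual.toWeakDual ((T ^ a) x)) ∈ Cw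
          have hmem : (T ^ (a + j * k)) x ∈ Metric.ball z r :=
            ha j (Nat.lt_succ_iff.1 (Finset.mem_range.1 hj))
          have key : (T ^ (j * k)) ((T ^ a) x) = (T ^ (a + j * k)) x := by
            rw [add_comm, pow_add] ; rfl
          show (T ^ (j * k)) (StrongDual.toWeakDual.symm (StrongDual.toWeakDual ((T ^ a) x)))
              ∈ Metric.closedBall z r
          rw [LinearEquiv.symm_apply_apply, key]
          exact Metric.ball_subset_closedBall hmem
      obtain ⟨φ, hφ⟩ := IsCompact.nonempty_iInter_of_sequence_nonempty_isCompact_isClosed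
        Fm hFmmono hFmne (hCwc.of_isClosed_subset (hFmcl 0) (hFmsub 0)) hFmcl
      -- the small periodic set
      refine ⟨(fun x' : StrongDual ℝ E => StrongDual.toWeakDual x') ⁻¹' (⋂ m, Fm m),
        ⟨StrongDual.toWeakDual.symm φ, ?_⟩, ?_, ?_, k, hk1, ?_⟩
      · show StrongDual.toWeakDual (StrongDual.toWeakDual.symm φ) ∈ ⋂ m, Fm m
        rw [LinearEquiv.apply_symm_apply]
        exact hφ
      · exact (isClosed_iInter hFmcl).preimage Dual.toWeakDual_continuous
      · intro y hy
        have : StrongDual.toWeakDual y ∈ Fm 0 := Set.mem_iInter.1 hy 0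
        exact hball this.1
      · rintro _ ⟨y, hy, rfl⟩
        refine Set.mem_iInter.2 fun m => ?_
        have hym : StrongDual.toWeakDual y ∈ Fm (m + 1) := Set.mem_iInter.1 hy (m + 1)
        have hkey : ∀ j, j ≤ m →
            (T ^ (j * k)) ((T ^ k) y) = (T ^ ((j + 1) * k)) y := by
          intro j _
          rw [Nat.succ_mul, pow_add] ; rfl
        constructor
        · show (T ^ k) y ∈ Metric.closedBall z r
          have h1 := Set.mem_iInter₂.1 hym.2 1 (Finset.mem_range.2 (by omega))
          have h1' : (T ^ (1 * k)) (StrongDual.toWeakDual.symm (StrongDual.toWeakDual y))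
              ∈ Metric.closedBall z r := h1
          rwa [one_mul, LinearEquiv.symm_apply_apply] at h1'
        · refine Set.mem_iInter₂.2 fun j hj => ?_
          have hjm : j ≤ m := Nat.lt_succ_iff.1 (Finset.mem_range.1 hj)
          have h1 := Set.mem_iInter₂.1 hym.2 (j + 1)
            (Finset.mem_range.2 (by omega))
          show S (j * k) (StrongDual.toWeakDual ((T ^ k) y)) ∈ Cw
          show (T ^ (j * k)) (StrongDual.toWeakDual.symm (StrongDual.toWeakDual ((T ^ k) y)))
              ∈ Metric.closedBall z r
          rw [LinearEquiv.symm_apply_apply, hkey j hjm]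
          have : (T ^ ((j + 1) * k)) (StrongDual.toWeakDual.symm (StrongDual.toWeakDual y))
              ∈ Metric.closedBall z r := h1
          rwa [LinearEquiv.symm_apply_apply] at this
  tfae_have 2 → 3 := by
    rintro ⟨hhyp, hDSP⟩
    refine ⟨hhyp, dense_iff_inter_open.2 fun U hU hUne => ?_⟩
    obtain ⟨z, hz⟩ := hUne
    obtain ⟨r, hr0, hball⟩ :=
      (Metric.nhds_basis_closedBall.mem_iff).1 (hU.mem_nhds hz)
    obtain ⟨Y, ⟨y, hy⟩, _, hYsub, k, hk1, hYinv⟩ :=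
      hDSP (Metric.ball z r) Metric.isOpen_ball ⟨z, Metric.mem_ball_self hr0⟩
    obtain ⟨p, hpmem, hpfix⟩ := auxFixedPoint T hTw k z r Y hYsub hYinv y hy
    exact ⟨p, hball hpmem, k, hk1, hpfix⟩
  tfae_have 3 → 1 := by
    rintro ⟨⟨x, hx⟩, hper⟩
    refine ⟨x, fun U hU hUne => ?_⟩
    obtain ⟨p, hpU, n, hn1, hpn⟩ := dense_iff_inter_open.1 hper U hU hUne
    have hpj : ∀ j : ℕ, (T ^ (j * n)) p = p := by
      intro j
      induction j with
      | zero => simp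
      | succ j ih =>
          rw [Nat.succ_mul, pow_add]
          show (T ^ (j * n)) ((T ^ n) p) = p
          rw [hpn, ih]
    refine ⟨n, hn1, fun m => ?_⟩
    set V : Set (StrongDual ℝ E) :=
      ⋂ j ∈ Finset.range (m + 1), (fun y => (T ^ (j * n)) y) ⁻¹' U with hV
    have hVopen : IsOpen V :=
      isOpen_biInter_finset fun j _ => hU.preimage (T ^ (j * n)).continuous
    have hpV : p ∈ V := Set.mem_iInter₂.2 fun j _ => by
      show (T ^ (j * n)) p ∈ U
      rw [hpj j]
      exact hpU
    obtain ⟨w, hwV, ⟨a, rfl⟩⟩ := dense_iff_inter_open.1 hx V hVopen ⟨p, hpV⟩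
    refine ⟨a, fun j hj => ?_⟩
    show (T ^ (a + j * n)) x ∈ U
    have key : (T ^ (a + j * n)) x = (T ^ (j * n)) ((T ^ a) x) := by
      rw [add_comm, pow_add] ; rfl
    rw [key]
    exact Set.mem_iInter₂.1 hwV j (Finset.mem_range.2 (Nat.lt_succ_of_le hj))
  tfae_finish
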